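/- Let a, N : ℝ → ℝ be continuous and let F₀ : ℝ → ℝ be Lebesgue integrable with compact support. Define F(t,x) := exp(∫_0^t N(s) ds) · F₀(x − ∫_0^t a(s) ds) and, for n ∈ ℕ, the n-th moment Υⁿ(t) := ∫_ℝ xⁿ · F(t,x) dx. Then for every n ≥ 1 and every t ≥ 0, Υⁿ(t) = exp(∫_0^t N(s) ds) · Υⁿ(0) + n · ∫_0^t exp(∫_s^t N(r) dr) · a(s) · Υ^{n−1}(s) ds. -/

import Mathlib

open MeasureTheory
open intervalIntegral Finset

/-- the moments of the transport solution satisfy the recursion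
`Υⁿ(t) = exp(∫_0^t N)·Υⁿ(0) + n·∫_0^t exp(∫_s^t N)·a(s)·Υ^{n−1}(s) ds`. -/
lemma aux_int (F₀ : ℝ → ℝ) (hF₀ : Integrable F₀) (hsupp : HasCompactSupport F₀) (k : ℕ) :
    Integrable (fun y : ℝ => y ^ k * F₀ y) := by
  obtain ⟨C, hC⟩ := hsupp.isCompact.exists_bound_of_continuousOn
    (f := fun y : ℝ => y ^ k) ((continuous_pow k).continuousOn)
  refine (hF₀.norm.const_mul C).mono'
    (((continuous_pow k).measurable.aestronglyMeasurable).mul hF₀.1)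
    (Filter.Eventually.of_forall fun y => ?_)
  by_cases hy : y ∈ tsupport F₀
  · rw [norm_mul]
    exact mul_le_mul_of_nonneg_right (hC y hy) (norm_nonneg _)
  · have h0 : F₀ y = 0 := image_eq_zero_of_notMem_tsupport hy
    simp only [h0, mul_zero, norm_zero]
    positivity

lemma aux_mom (F₀ : ℝ → ℝ) (hF₀ : Integrable F₀) (hsupp : HasCompactSupport F₀)
    (j : ℕ) (c : ℝ) :
    (∫ x : ℝ, x ^ j * F₀ (x - c)) =
      ∑ k ∈ Finset.range (j + 1), (j.choose k : ℝ) * c ^ (j - k) * ∫ y : ℝ, y ^ k * F₀ y := by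
  have h1 : (∫ x : ℝ, x ^ j * F₀ (x - c)) = ∫ x : ℝ, (x + c) ^ j * F₀ x := by
    have h := integral_sub_right_eq_self (μ := volume) (fun x : ℝ => (x + c) ^ j * F₀ x) c
    simpa using h
  rw [h1]
  have h2 : ∀ x : ℝ, (x + c) ^ j * F₀ x =
      ∑ k ∈ Finset.range (j + 1), (j.choose k : ℝ) * c ^ (j - k) * (x ^ k * F₀ x) := by
    intro x
    rw [add_pow, Finset.sum_mul]
    exact Finset.sum_congr rfl fun k _ => by ring
  simp_rw [h2]
  rw [integral_finset_sum _ (fun k _ => (aux_int F₀ hF₀ hsupp k).const_mul _)]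
  exact Finset.sum_congr rfl fun k _ => integral_const_mul _ _

lemma aux_deriv (a : ℝ → ℝ) (ha : Continuous a) (x : ℝ) :
    HasDerivAt (fun u => ∫ s in (0:ℝ)..u, a s) (a x) x :=
  integral_hasDerivAt_right (ha.intervalIntegrable _ _) (ha.stronglyMeasurableAtFilter _ _)
    ha.continuousAt

lemma aux_cont (a : ℝ → ℝ) (ha : Continuous a) :
    Continuous (fun u => ∫ s in (0:ℝ)..u, a s) :=
  Differentiable.continuous (fun x => (aux_deriv a ha x).differentiableAt)

lemma aux_pow_int (a : ℝ → ℝ) (ha : Continuous a) (t : ℝ) (j : ℕ) :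
    (∫ s in (0:ℝ)..t, a s * (∫ r in (0:ℝ)..s, a r) ^ j) =
      (∫ r in (0:ℝ)..t, a r) ^ (j + 1) / (j + 1) := by
  have h := integral_comp_smul_deriv (a := (0:ℝ)) (b := t)
    (f := fun u => ∫ s in (0:ℝ)..u, a s) (f' := a) (g := fun y => y ^ j)
    (fun x _ => aux_deriv a ha x) ha.continuousOn (continuous_pow j)
  simp only [smul_eq_mul, Function.comp] at h
  rw [h, intervalIntegral.integral_same, integral_pow]
  simp

theorem stmt_4 (a N : ℝ → ℝ) (ha : Continuous a) (hN : Continuous N)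
    (F₀ : ℝ → ℝ) (hF₀ : Integrable F₀) (hsupp : HasCompactSupport F₀)
    (F : ℝ → ℝ → ℝ)
    (hF : ∀ t x : ℝ, F t x =
      Real.exp (∫ s in (0:ℝ)..t, N s) * F₀ (x - ∫ s in (0:ℝ)..t, a s))
    (Υ : ℕ → ℝ → ℝ)
    (hΥ : ∀ (n : ℕ) (t : ℝ), Υ n t = ∫ x : ℝ, x ^ n * F t x) :
    ∀ n : ℕ, 1 ≤ n → ∀ t : ℝ, 0 ≤ t →
      Υ n t = Real.exp (∫ s in (0:ℝ)..t, N s) * Υ n 0 +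
        (n : ℝ) * ∫ s in (0:ℝ)..t, Real.exp (∫ r in s..t, N r) * a s * Υ (n - 1) s := by
  intro n hn t ht
  obtain ⟨m, rfl⟩ : ∃ m, n = m + 1 := ⟨n - 1, (Nat.succ_pred_eq_of_pos hn).symm⟩
  have hU : ∀ (j : ℕ) (u : ℝ), Υ j u =
      Real.exp (∫ s in (0:ℝ)..u, N s) *
        ∑ k ∈ Finset.range (j + 1),
          (j.choose k : ℝ) * (∫ s in (0:ℝ)..u, a s) ^ (j - k) * ∫ y : ℝ, y ^ k * F₀ y := by
    intro j u
    rw [hΥ]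
    have heq : ∀ x : ℝ, x ^ j * (Real.exp (∫ s in (0:ℝ)..u, N s) *
        F₀ (x - ∫ s in (0:ℝ)..u, a s)) =
        Real.exp (∫ s in (0:ℝ)..u, N s) * (x ^ j * F₀ (x - ∫ s in (0:ℝ)..u, a s)) :=
      fun x => by ring
    simp_rw [hF, heq]
    rw [MeasureTheory.integral_const_mul, aux_mom F₀ hF₀ hsupp]
  have hU0 : Υ (m + 1) 0 = ∫ y : ℝ, y ^ (m + 1) * F₀ y := by
    rw [hΥ]
    simp [hF]
  have hsplit : ∀ s : ℝ, Real.exp (∫ r in s..t, N r) * Real.exp (∫ r in (0:ℝ)..s, N r)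
      = Real.exp (∫ r in (0:ℝ)..t, N r) := by
    intro s
    rw [← Real.exp_add, add_comm,
      intervalIntegral.integral_add_adjacent_intervals (hN.intervalIntegrable _ _)
        (hN.intervalIntegrable _ _)]
  have hint : (∫ s in (0:ℝ)..t, Real.exp (∫ r in s..t, N r) * a s * Υ m s)
      = ∑ k ∈ Finset.range (m + 1),
          (Real.exp (∫ r in (0:ℝ)..t, N r) * ((m.choose k : ℝ) * ∫ y : ℝ, y ^ k * F₀ y)) *
            ((∫ r in (0:ℝ)..t, a r) ^ (m - k + 1) / (((m - k : ℕ) : ℝ) + 1)) := by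
    rw [intervalIntegral.integral_congr (g := fun s =>
        ∑ k ∈ Finset.range (m + 1),
          (Real.exp (∫ r in (0:ℝ)..t, N r) * ((m.choose k : ℝ) * ∫ y : ℝ, y ^ k * F₀ y)) *
            (a s * (∫ r in (0:ℝ)..s, a r) ^ (m - k)))
        (fun s _ => ?_)]
    · rw [intervalIntegral.integral_finset_sum (fun k _ => Continuous.intervalIntegrable
        (show Continuous (fun s => (Real.exp (∫ r in (0:ℝ)..t, N r) *
          ((m.choose k : ℝ) * ∫ y : ℝ, y ^ k * F₀ y)) * (a s * (∫ r in (0:ℝ)..s, a r) ^ (m - k)))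
          from continuous_const.mul (ha.mul ((aux_cont a ha).pow _))) _ _)]
      exact Finset.sum_congr rfl fun k _ => by
        rw [intervalIntegral.integral_const_mul, aux_pow_int a ha t (m - k)]
    · rw [hU m s, Finset.mul_sum, Finset.mul_sum]
      refine Finset.sum_congr rfl fun k _ => ?_
      linear_combination (a s * (m.choose k : ℝ) * (∫ r in (0:ℝ)..s, a r) ^ (m - k) *
        (∫ y : ℝ, y ^ k * F₀ y)) * hsplit s
  simp only [Nat.add_sub_cancel]
  rw [hint, hU (m + 1) t, hU0, Finset.sum_range_succ]
  simp only [Nat.choose_self, Nat.cast_one, Nat.sub_self, pow_zero, one_mul, mul_one]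
  rw [mul_add, add_comm]
  congr 1
  rw [Finset.mul_sum, Finset.mul_sum]
  refine Finset.sum_congr rfl fun k hk => ?_
  have hk' : k ≤ m := Nat.lt_succ_iff.mp (Finset.mem_range.mp hk)
  have hkR : (k : ℝ) ≤ m := Nat.cast_le.mpr hk'
  have h1 : m - k + 1 = m + 1 - k := by omega
  have hc1 : ((m - k : ℕ) : ℝ) = (m : ℝ) - k := by rw [Nat.cast_sub hk']
  have hc2 : ((m + 1 - k : ℕ) : ℝ) = (m : ℝ) + 1 - k := by
    rw [Nat.cast_sub (by omega)]; push_cast; ring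
  have hne : (m : ℝ) - k + 1 ≠ 0 := by linarith
  have hcast : (m.choose k : ℝ) * ((m : ℝ) + 1) =
      ((m + 1).choose k : ℝ) * ((m : ℝ) - k + 1) := by
    have h := Nat.choose_mul_succ_eq m k
    have h' : (m.choose k : ℝ) * ((m : ℝ) + 1) =
        ((m + 1).choose k : ℝ) * ((m + 1 - k : ℕ) : ℝ) := by exact_mod_cast h
    rw [h', hc2]; ring
  have hm1 : ((m + 1 : ℕ) : ℝ) = (m : ℝ) + 1 := by push_cast; ring
  rw [h1, hc1, hm1]
  field_simp
  linear_combination (- (∫ y : ℝ, y ^ k * F₀ y) *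
    (∫ r in (0:ℝ)..t, a r) ^ (m + 1 - k)) * hcast
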